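/- Every Alice-concordant state ρ = Σ_j p_j π_j ⊗ ρ_j that is also Bob-concordant (i.e., equals Σ_k q_k σ_k ⊗ τ_k with {τ_k} mutually orthogonal rank-one projectors on H_B) can be written in the consonant form ρ = Σ_j r_j π'_j ⊗ π''_j, where {π'_j} are mutually orthogonal rank-one projectors on H_A and {π''_j} are mutually orthogonal rank-one projectors on H_B. -/

import Mathlib

open Matrix
open scoped Kronecker ComplexOrder

noncomputable section

abbrev Mat (n : Type) := Matrix n n ℂ

/-- A density operator: positive semidefinite with unit trace. -/
def IsDensity {n : Type} [Fintype n] (ρ : Mat n) : Prop :=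
  ρ.PosSemidef ∧ ρ.trace = 1

/-- A rank-one projector: Hermitian idempotent of trace one. -/
def IsRankOneProj {n : Type} [Fintype n] (π : Mat n) : Prop :=
  π.IsHermitian ∧ π * π = π ∧ π.trace = 1

/-- A mutually orthogonal family of operators. -/
def OrthFamily {n J : Type} [Fintype n] (π : J → Mat n) : Prop :=
  ∀ i j : J, i ≠ j → π i * π j = 0

/-- A probability distribution on a finite index set. -/
def IsProbDist {J : Type} [Fintype J] (p : J → ℝ) : Prop :=
  (∀ j, 0 ≤ p j) ∧ ∑ j, p j = 1

/-- Outer product |v⟩⟨v|. -/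
def outer {n : Type} (v : n → ℂ) : Mat n :=
  fun i j => v i * star (v j)

/-- Partial trace over the first (Alice) factor. -/
def traceA {a b : Type} [Fintype a] (ρ : Mat (a × b)) : Mat b :=
  fun i j => ∑ k, ρ (k, i) (k, j)

/-- Partial trace over the second (Bob) factor. -/
def traceB {a b : Type} [Fintype b] (ρ : Mat (a × b)) : Mat a :=
  fun i j => ∑ k, ρ (i, k) (j, k)

/-- Separable (unentangled): a convex combination of product density operators. -/
def Separable {a b : Type} [Fintype a] [Fintype b] (ρ : Mat (a × b)) : Prop :=
  ∃ (m : ℕ) (p : Fin m → ℝ) (σ : Fin m → Mat a) (τ : Fin m → Mat b),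
    IsProbDist p ∧ (∀ k, IsDensity (σ k)) ∧ (∀ k, IsDensity (τ k)) ∧
    ρ = ∑ k, (p k : ℂ) • (σ k ⊗ₖ τ k)

/-- Alice-concordant (zero Alice-discord): ρ = Σ_j p_j π_j ⊗ ρ_j with
{π_j} mutually orthogonal rank-one projectors on Alice's factor. -/
def AliceConcordant {a b : Type} [Fintype a] [Fintype b] (ρ : Mat (a × b)) : Prop :=
  ∃ (m : ℕ) (p : Fin m → ℝ) (π : Fin m → Mat a) (σ : Fin m → Mat b),
    IsProbDist p ∧ (∀ j, IsRankOneProj (π j)) ∧ OrthFamily π ∧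
    (∀ j, IsDensity (σ j)) ∧ ρ = ∑ j, (p j : ℂ) • (π j ⊗ₖ σ j)

/-- Bob-concordant: the symmetric notion. -/
def BobConcordant {a b : Type} [Fintype a] [Fintype b] (ρ : Mat (a × b)) : Prop :=
  ∃ (m : ℕ) (p : Fin m → ℝ) (σ : Fin m → Mat a) (π : Fin m → Mat b),
    IsProbDist p ∧ (∀ j, IsRankOneProj (π j)) ∧ OrthFamily π ∧
    (∀ j, IsDensity (σ j)) ∧ ρ = ∑ j, (p j : ℂ) • (σ j ⊗ₖ π j)

/-- Von Neumann entropy, via the eigenvalues of a Hermitian matrix. -/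
def vN {n : Type} [Fintype n] [DecidableEq n] (ρ : Mat n) : ℝ :=
  if h : ρ.IsHermitian then -∑ i, h.eigenvalues i * Real.log (h.eigenvalues i) else 0


/-- Auxiliary: conjugating by a rank-one outer product yields a scalar multiple of it. -/
lemma outer_mul_mul {n : Type} [Fintype n] (v : n → ℂ) (A : Mat n) :
    outer v * A * outer v = (star v ⬝ᵥ A *ᵥ v) • outer v := by
  ext i j
  simp only [Matrix.mul_apply, outer, Matrix.smul_apply, dotProduct, Matrix.mulVec,
    Pi.star_apply, smul_eq_mul, Finset.sum_mul, Finset.mul_sum]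
  rw [Finset.sum_comm]
  refine Finset.sum_congr rfl fun s _ => Finset.sum_congr rfl fun t _ => by ring

/-- Auxiliary: every rank-one projector is an outer product. -/
lemma isRankOneProj_outer {n : Type} [Fintype n] [DecidableEq n] {π : Mat n}
    (h : IsRankOneProj π) : ∃ v : n → ℂ, π = outer v := by
  obtain ⟨hh, hidem, htr⟩ := h
  have heig : ∀ j, hh.eigenvalues j * hh.eigenvalues j = hh.eigenvalues j := by
    intro j
    have h1 := hh.mulVec_eigenvectorBasis j
    have h2 : (π * π) *ᵥ ⇑(hh.eigenvectorBasis j)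
        = (hh.eigenvalues j * hh.eigenvalues j) • ⇑(hh.eigenvectorBasis j) := by
      rw [← Matrix.mulVec_mulVec, h1, Matrix.mulVec_smul, h1, smul_smul]
    rw [hidem, h1] at h2
    have hne : (⇑(hh.eigenvectorBasis j) : n → ℂ) ≠ 0 := by
      intro h0
      have := hh.eigenvectorBasis.orthonormal.ne_zero j
      apply this
      ext i
      exact congrFun h0 i
    have := sub_eq_zero.mpr h2.symm
    rw [← sub_smul] at this
    rcases smul_eq_zero.mp this with h | h
    · linarith [sub_eq_zero.mp (by exact_mod_cast h)]
    · exact absurd h hne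
  have hsum : ∑ j, hh.eigenvalues j = 1 := by
    have hU : star (hh.eigenvectorUnitary : Matrix n n ℂ) * (hh.eigenvectorUnitary : Matrix n n ℂ)
        = 1 := Matrix.mem_unitaryGroup_iff'.mp hh.eigenvectorUnitary.2
    have : π.trace = ∑ j, (hh.eigenvalues j : ℂ) := by
      conv_lhs => rw [hh.spectral_theorem, Unitary.conjStarAlgAut_apply]
      rw [Matrix.trace_mul_cycle, hU, one_mul, Matrix.trace_diagonal]
      rfl
    rw [htr] at this
    exact_mod_cast this.symm
  have h01 : ∀ j, hh.eigenvalues j = 0 ∨ hh.eigenvalues j = 1 := by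
    intro j
    have h := heig j
    rcases mul_eq_zero.mp (by linarith [h] : hh.eigenvalues j * (hh.eigenvalues j - 1) = 0)
      with h' | h'
    · exact Or.inl h'
    · exact Or.inr (by linarith)
  obtain ⟨j0, hj0⟩ : ∃ j0, hh.eigenvalues j0 = 1 := by
    by_contra hcon
    push_neg at hcon
    rw [Finset.sum_eq_zero (fun j _ => (h01 j).resolve_right (hcon j))] at hsum
    norm_num at hsum
  have hrest : ∀ j, j ≠ j0 → hh.eigenvalues j = 0 := by
    intro j hj
    have h2 : ∑ i ∈ Finset.univ.erase j0, hh.eigenvalues i = 0 := by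
      have h3 := Finset.add_sum_erase Finset.univ hh.eigenvalues (Finset.mem_univ j0)
      rw [← h3, hj0] at hsum
      linarith
    have hnn : ∀ i ∈ Finset.univ.erase j0, 0 ≤ hh.eigenvalues i := by
      intro i _; rcases h01 i with h | h <;> simp [h]
    exact (Finset.sum_eq_zero_iff_of_nonneg hnn).mp h2 j
      (Finset.mem_erase.mpr ⟨hj, Finset.mem_univ j⟩)
  refine ⟨fun i => (hh.eigenvectorUnitary : Matrix n n ℂ) i j0, ?_⟩
  have hd : ∀ k, (RCLike.ofReal ∘ hh.eigenvalues : n → ℂ) k = if k = j0 then 1 else 0 := by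
    intro k
    by_cases hk : k = j0
    · simp [hk, hj0]
    · simp [Function.comp, hrest k hk, hk]
  conv_lhs => rw [hh.spectral_theorem, Unitary.conjStarAlgAut_apply]
  ext i j
  rw [Matrix.mul_apply]
  rw [Finset.sum_eq_single j0]
  · rw [Matrix.mul_diagonal, hd, if_pos rfl, mul_one, Matrix.star_apply]
    rfl
  · intro k _ hk
    rw [Matrix.mul_diagonal, hd, if_neg hk, mul_zero, zero_mul]
  · intro h
    exact absurd (Finset.mem_univ j0) h

/-- a state that is both Alice- and Bob-concordant is consonant, i.e.
diagonal in a product of orthonormal bases. -/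
theorem stmt_4 {a b : Type} [Fintype a] [Fintype b] (ρ : Mat (a × b))
    (hρ : IsDensity ρ) (hA : AliceConcordant ρ) (hB : BobConcordant ρ) :
    ∃ (m n : ℕ) (u : Fin m → Mat a) (v : Fin n → Mat b) (r : Fin m × Fin n → ℝ),
      (∀ i, IsRankOneProj (u i)) ∧ OrthFamily u ∧
      (∀ j, IsRankOneProj (v j)) ∧ OrthFamily v ∧
      IsProbDist r ∧
      ρ = ∑ x : Fin m × Fin n, (r x : ℂ) • (u x.1 ⊗ₖ v x.2) := by
  classical
  obtain ⟨m, p, π, σ, hp, hπ, hπo, hσ, hAeq⟩ := hA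
  obtain ⟨n, q, τ, π', hq, hπ'1, hπ'o, hτ, hBeq⟩ := hB
  choose w hw using fun k => isRankOneProj_outer (hπ'1 k)
  -- sandwich via the Alice form
  have key : ∀ k : Fin n, ((1 : Mat a) ⊗ₖ π' k) * ρ * ((1 : Mat a) ⊗ₖ π' k) =
      ∑ j, (p j : ℂ) • (π j ⊗ₖ (π' k * σ j * π' k)) := by
    intro k
    rw [hAeq, Finset.mul_sum, Finset.sum_mul]
    refine Finset.sum_congr rfl fun j _ => ?_
    rw [mul_smul_comm, smul_mul_assoc, ← Matrix.mul_kronecker_mul, ← Matrix.mul_kronecker_mul,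
      one_mul, mul_one]
  -- sandwich via the Bob form
  have keyB : ∀ k : Fin n, ((1 : Mat a) ⊗ₖ π' k) * ρ * ((1 : Mat a) ⊗ₖ π' k) =
      ∑ l, (q l : ℂ) • (τ l ⊗ₖ (π' k * π' l * π' k)) := by
    intro k
    rw [hBeq, Finset.mul_sum, Finset.sum_mul]
    refine Finset.sum_congr rfl fun l _ => ?_
    rw [mul_smul_comm, smul_mul_assoc, ← Matrix.mul_kronecker_mul, ← Matrix.mul_kronecker_mul,
      one_mul, mul_one]
  -- the diagonal sandwich sum reproduces ρ (from the Bob form)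
  have hdiag : ∑ k, ((1 : Mat a) ⊗ₖ π' k) * ρ * ((1 : Mat a) ⊗ₖ π' k) = ρ := by
    calc ∑ k, ((1 : Mat a) ⊗ₖ π' k) * ρ * ((1 : Mat a) ⊗ₖ π' k)
        = ∑ k, ∑ l, (q l : ℂ) • (τ l ⊗ₖ (π' k * π' l * π' k)) :=
          Finset.sum_congr rfl fun k _ => keyB k
      _ = ∑ l, ∑ k, (q l : ℂ) • (τ l ⊗ₖ (π' k * π' l * π' k)) := Finset.sum_comm
      _ = ∑ l, (q l : ℂ) • (τ l ⊗ₖ π' l) := by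
          refine Finset.sum_congr rfl fun l _ => ?_
          rw [Finset.sum_eq_single l]
          · rw [(hπ'1 l).2.1, (hπ'1 l).2.1]
          · intro k _ hk
            rw [hπ'o k l hk, Matrix.zero_mul, Matrix.kronecker_zero, smul_zero]
          · intro h; exact absurd (Finset.mem_univ l) h
      _ = ρ := hBeq.symm
  have hmain : ρ = ∑ k, ∑ j, (p j : ℂ) • (π j ⊗ₖ (π' k * σ j * π' k)) := by
    rw [← hdiag]
    exact Finset.sum_congr rfl fun k _ => key k
  -- the scalars
  set c : Fin m → Fin n → ℂ := fun j k => star (w k) ⬝ᵥ (σ j) *ᵥ (w k) with hc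
  have hpos : ∀ j k, 0 ≤ c j k := fun j k => (hσ j).1.dotProduct_mulVec_nonneg (w k)
  have hcim : ∀ j k, (c j k).im = 0 := by
    intro j k
    have := (Complex.le_def.mp (hpos j k)).2
    simpa using this.symm
  have hcre : ∀ j k, (((c j k).re : ℂ)) = c j k := by
    intro j k
    exact Complex.ext (by simp) (by simp [hcim j k])
  have hconj : ∀ j k, π' k * σ j * π' k = c j k • π' k := by
    intro j k
    rw [hw k]
    exact outer_mul_mul (w k) (σ j)
  have hfinal : ρ = ∑ x : Fin m × Fin n, ((p x.1 * (c x.1 x.2).re : ℝ) : ℂ) •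
      (π x.1 ⊗ₖ π' x.2) := by
    rw [Fintype.sum_prod_type, Finset.sum_comm, hmain]
    refine Finset.sum_congr rfl fun k _ => Finset.sum_congr rfl fun j _ => ?_
    rw [hconj j k, Matrix.kronecker_smul, smul_smul]
    congr 1
    push_cast
    rw [hcre]
  refine ⟨m, n, π, π', fun x => p x.1 * (c x.1 x.2).re, hπ, hπo, hπ'1, hπ'o, ⟨?_, ?_⟩, hfinal⟩
  · intro x
    refine mul_nonneg (hp.1 x.1) ?_
    have := (Complex.le_def.mp (hpos x.1 x.2)).1
    simpa using this
  · have htr := congrArg Matrix.trace hfinal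
    rw [hρ.2, Matrix.trace_sum] at htr
    have htr2 : (1 : ℂ) = ∑ x : Fin m × Fin n, ((p x.1 * (c x.1 x.2).re : ℝ) : ℂ) := by
      rw [htr]
      refine Finset.sum_congr rfl fun x _ => ?_
      rw [Matrix.trace_smul, Matrix.trace_kronecker, (hπ x.1).2.2, (hπ'1 x.2).2.2,
        one_mul, smul_eq_mul, mul_one]
    rw [← Complex.ofReal_sum] at htr2
    exact_mod_cast htr2.symm
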